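/- For any convex TU game v on N, any player i ∈ N, and any coalition A with i ∈ A ⊆ N, the Shapley value of i in the sub-game v_A is at most the Shapley value of i in v. In other words, the Shapley value encourages the grand coalition in convex games. -/

import Mathlib

/-- The set of predecessors of `i` in the order given by the permutation `π`. -/
def predecessors {α : Type*} [Fintype α] [LinearOrder α]
    (π : Equiv.Perm α) (i : α) : Finset α :=
  Finset.univ.filter (fun j => π.symm j < π.symm i)

/-- The Shapley value of player `i` in the game `v`: the average over all permutations
of the marginal contribution of `i` to its set of predecessors. -/
noncomputable def shapley {α : Type*} [Fintype α] [LinearOrder α]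
    (v : Finset α → ℝ) (i : α) : ℝ :=
  ((Fintype.card α).factorial : ℝ)⁻¹ *
    ∑ π : Equiv.Perm α, (v (insert i (predecessors π i)) - v (predecessors π i))


open Finset Equiv Nat

lemma natid (a : ℕ) : ∀ (b t : ℕ), t ≤ a →
    (a+1)! * ∑ k ∈ range (b+1), b.choose k * ((t+k)! * ((a+b) - (t+k))!)
      = (a+b+1)! * (t ! * (a-t)!) := by
  intro b
  induction b with
  | zero =>
    intro t ht
    simp
  | succ b ih =>
    intro t ht
    have key : ∑ k ∈ range (b+1+1), (b+1).choose k * ((t+k)! * ((a+b+1) - (t+k))!)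
        = (a+b+2) * ∑ k ∈ range (b+1), b.choose k * ((t+k)! * ((a+b) - (t+k))!) := by
      rw [Finset.sum_range_succ']
      have e1 : ∀ k ∈ range (b+1), (b+1).choose (k+1) * ((t+(k+1))! * ((a+b+1) - (t+(k+1)))!)
          = b.choose k * ((t+(k+1))! * ((a+b+1) - (t+(k+1)))!)
            + b.choose (k+1) * ((t+(k+1))! * ((a+b+1) - (t+(k+1)))!) := by
        intro k _
        rw [Nat.choose_succ_succ, Nat.add_mul]
      rw [Finset.sum_congr rfl e1, Finset.sum_add_distrib]
      have e2 : ∑ k ∈ range (b+1), b.choose (k+1) * ((t+(k+1))! * ((a+b+1) - (t+(k+1)))!)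
            + (b+1).choose 0 * ((t+0)! * ((a+b+1) - (t+0))!)
          = ∑ k ∈ range (b+1), b.choose k * ((t+k)! * ((a+b+1) - (t+k))!) := by
        have := Finset.sum_range_succ' (fun k => b.choose k * ((t+k)! * ((a+b+1) - (t+k))!)) (b+1)
        rw [Finset.sum_range_succ, Nat.choose_succ_self, zero_mul, add_zero] at this
        simp only [Nat.choose_zero_right, one_mul] at this ⊢
        exact this.symm
      rw [add_assoc, e2, ← Finset.sum_add_distrib, Finset.mul_sum]
      refine Finset.sum_congr rfl ?_
      intro k hk
      have hk' : k ≤ b := by simpa [Nat.lt_succ_iff] using hk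
      have htk : t + k ≤ a + b := Nat.add_le_add ht hk'
      obtain ⟨d, hd⟩ := Nat.le.dest htk
      have h1 : a + b + 1 - (t + (k+1)) = d := by omega
      have h2 : a + b + 1 - (t + k) = d + 1 := by omega
      have h3 : a + b - (t + k) = d := by omega
      rw [h1, h2, h3, show t + (k+1) = (t+k) + 1 from by ring,
        Nat.factorial_succ (t+k), Nat.factorial_succ d,
        show a + b + 2 = (t+k+1) + (d+1) from by omega]
      ring
    calc (a+1)! * ∑ k ∈ range (b+1+1), (b+1).choose k * ((t+k)! * ((a+(b+1)) - (t+k))!)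
        = (a+1)! * ((a+b+2) * ∑ k ∈ range (b+1), b.choose k * ((t+k)! * ((a+b) - (t+k))!)) := by
          rw [show a+(b+1) = a+b+1 from by ring, key]
      _ = (a+b+2) * ((a+b+1)! * (t ! * (a-t)!)) := by rw [← ih t ht]; ring
      _ = (a+(b+1)+1)! * (t ! * (a-t)!) := by
          have hf : (a+(b+1)+1)! = (a+b+2) * (a+b+1)! := by
            rw [show a+(b+1)+1 = a+b+1+1 from by ring, Nat.factorial_succ]; try ring
          rw [hf]; try ring

section rank
variable {α : Type*} [Fintype α] [LinearOrder α]

lemma card_filter_lt (a : α) :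
    (Finset.univ.filter (· < a)).card
      = ((Fintype.orderIsoFinOfCardEq α rfl).symm a : ℕ) := by
  classical
  set e := Fintype.orderIsoFinOfCardEq α rfl
  rw [← Fintype.card_subtype]
  have h1 : Fintype.card {x : α // x < a}
      = Fintype.card {k : Fin (Fintype.card α) // k < e.symm a} :=
    Fintype.card_congr (Equiv.subtypeEquiv e.symm.toEquiv (fun x => (e.symm.lt_iff_lt).symm))
  rw [h1, Fintype.card_subtype]
  have : (Finset.univ.filter (· < e.symm a)) = Finset.Iio (e.symm a) := by
    ext x; simp
  rw [this, Fin.card_Iio]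
end rank

section count
variable {α : Type*} [Fintype α] [LinearOrder α]

lemma card_perm_pred [DecidableEq α] (i : α) (S : Finset α) (hS : S ⊆ Finset.univ.erase i) :
    (Finset.univ.filter fun π : Equiv.Perm α => predecessors π i = S).card
      = S.card ! * (Fintype.card α - 1 - S.card)! := by
  classical
  set e := Fintype.orderIsoFinOfCardEq α rfl with he
  have hiS : i ∉ S := fun h => (Finset.mem_erase.1 (hS h)).1 rfl
  have hcard_univ : (Finset.univ : Finset α).card = Fintype.card α := Finset.card_univ
  have hn0 : 0 < Fintype.card α := Fintype.card_pos_iff.2 ⟨i⟩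
  have hs_le : S.card ≤ Fintype.card α - 1 := by
    have := Finset.card_le_card hS
    rwa [Finset.card_erase_of_mem (Finset.mem_univ i), hcard_univ] at this
  have hs : S.card < Fintype.card α := lt_of_le_of_lt hs_le (by omega)
  set c : α := e ⟨S.card, hs⟩ with hc
  have hrank_c : (Finset.univ.filter (· < c)).card = S.card := by
    rw [card_filter_lt, hc, ← he, OrderIso.symm_apply_apply]
  set T : Finset α := Finset.univ \ insert i S with hT
  have hiT : i ∉ T := by simp [hT]
  have hST : ∀ x, x ∈ S → x ∉ T := fun x hx => by simp [hT, hx]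
  have hTcard : T.card = Fintype.card α - 1 - S.card := by
    rw [hT, Finset.card_sdiff_of_subset (Finset.subset_univ _), hcard_univ,
      Finset.card_insert_of_notMem hiS]
    omega
  have symm_eq : ∀ π : Equiv.Perm α, predecessors π i = S → π.symm i = c := by
    intro π hπ
    have himg : Finset.univ.filter (· < π.symm i) = S.image π.symm := by
      ext x
      simp only [Finset.mem_filter, Finset.mem_univ, true_and, Finset.mem_image]
      constructor
      · intro hx
        exact ⟨π x, by rw [← hπ]; simp [predecessors, hx], by simp⟩
      · rintro ⟨j, hj, rfl⟩
        rw [← hπ] at hj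
        simpa [predecessors] using hj
    have hcard2 : (Finset.univ.filter (· < π.symm i)).card = S.card := by
      rw [himg, Finset.card_image_of_injective _ π.symm.injective]
    have h1 := card_filter_lt (π.symm i)
    have h2 := card_filter_lt c
    rw [hcard2] at h1
    rw [hrank_c] at h2
    have : e.symm (π.symm i) = e.symm c := Fin.ext (by rw [← h1, ← h2])
    exact e.symm.injective this
  have hmem₁ : ∀ (π : Equiv.Perm α), predecessors π i = S → ∀ x : α, x < c ↔ π x ∈ S := by
    intro π hπ x
    have h := symm_eq π hπ
    rw [← hπ]
    simp [predecessors, h]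
  have hmem₂ : ∀ (π : Equiv.Perm α), predecessors π i = S → ∀ x : α, c < x ↔ π x ∈ T := by
    intro π hπ x
    have h := symm_eq π hπ
    have h1 : π x ∈ S ↔ x < c := (hmem₁ π hπ x).symm
    have h2 : π x = i ↔ x = c := by
      rw [Equiv.apply_eq_iff_eq_symm_apply, h]
    simp only [hT, Finset.mem_sdiff, Finset.mem_univ, true_and, Finset.mem_insert, not_or, h1, h2]
    constructor
    · intro hx
      exact ⟨fun hh => absurd hx (by rw [hh]; exact lt_irrefl c), not_lt_of_gt hx⟩
    · rintro ⟨hne, hnlt⟩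
      exact lt_of_le_of_ne (not_lt.1 hnlt) (Ne.symm hne)
  -- the map to pairs of bijections
  let Φ : {π : Equiv.Perm α // predecessors π i = S} →
      (({x : α // x < c} ≃ {x : α // x ∈ S}) × ({x : α // c < x} ≃ {x : α // x ∈ T})) :=
    fun π => ⟨Equiv.subtypeEquiv π.1 (hmem₁ π.1 π.2), Equiv.subtypeEquiv π.1 (hmem₂ π.1 π.2)⟩
  have hΦinj : Function.Injective Φ := by
    intro π π' hh
    have h1 := congrArg Prod.fst hh
    have h2 := congrArg Prod.snd hh
    apply Subtype.ext
    apply Equiv.ext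
    intro x
    rcases lt_trichotomy x c with hx | hx | hx
    · have := congrArg (fun (q : {x : α // x < c} ≃ {x : α // x ∈ S}) => (q ⟨x, hx⟩ : α)) h1
      simpa [Φ] using this
    · subst hx
      have e1 : π.1 c = i := by
        rw [← symm_eq π.1 π.2, Equiv.apply_symm_apply]
      have e2 : π'.1 c = i := by
        rw [← symm_eq π'.1 π'.2, Equiv.apply_symm_apply]
      rw [e1, e2]
    · have := congrArg (fun (q : {x : α // c < x} ≃ {x : α // x ∈ T}) => (q ⟨x, hx⟩ : α)) h2
      simpa [Φ] using this
  have hΦsurj : Function.Surjective Φ := by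
    rintro ⟨f, g⟩
    set F : α → α := fun x =>
      if h : x < c then (f ⟨x, h⟩ : α) else if h' : c < x then (g ⟨x, h'⟩ : α) else i with hF
    have hFc : F c = i := by simp [hF]
    have hFlt : ∀ (x : α) (h : x < c), F x = (f ⟨x, h⟩ : α) := by
      intro x h; simp [hF, h]
    have hFgt : ∀ (x : α) (h : c < x), F x = (g ⟨x, h⟩ : α) := by
      intro x h; simp [hF, not_lt_of_gt h, h]
    have hFinj : Function.Injective F := by
      intro x y hxy
      rcases lt_trichotomy x c with hx | hx | hx <;> rcases lt_trichotomy y c with hy | hy | hy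
      · rw [hFlt x hx, hFlt y hy] at hxy
        have := f.injective (Subtype.ext hxy)
        exact congrArg Subtype.val this
      · subst hy
        rw [hFlt x hx, hFc] at hxy
        exact absurd (hxy ▸ (f ⟨x, hx⟩).2) hiS
      · rw [hFlt x hx, hFgt y hy] at hxy
        exact absurd (hxy.symm ▸ (f ⟨x, hx⟩).2) (fun hh => hST _ hh (g ⟨y, hy⟩).2)
      · subst hx
        rw [hFc, hFlt y hy] at hxy
        exact absurd (hxy ▸ (f ⟨y, hy⟩).2) hiS
      · rw [hx, hy]
      · subst hx
        rw [hFc, hFgt y hy] at hxy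
        exact absurd (hxy ▸ (g ⟨y, hy⟩).2) hiT
      · rw [hFgt x hx, hFlt y hy] at hxy
        exact absurd (hxy ▸ (g ⟨x, hx⟩).2) (fun hh => hST _ (f ⟨y, hy⟩).2 hh)
      · subst hy
        rw [hFgt x hx, hFc] at hxy
        exact absurd (hxy ▸ (g ⟨x, hx⟩).2) hiT
      · rw [hFgt x hx, hFgt y hy] at hxy
        have := g.injective (Subtype.ext hxy)
        exact congrArg Subtype.val this
    have hFbij : Function.Bijective F := Finite.injective_iff_bijective.1 hFinj
    set π₀ : Equiv.Perm α := Equiv.ofBijective F hFbij with hπ₀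
    have hπ₀app : ∀ x, π₀ x = F x := fun x => rfl
    have hπ₀c : π₀ c = i := hFc
    have hsymm : π₀.symm i = c := by rw [Equiv.symm_apply_eq]; exact hπ₀c.symm
    have hq : ∀ x : α, x < c ↔ π₀ x ∈ S := by
      intro x
      constructor
      · intro h
        rw [hπ₀app, hFlt x h]
        exact (f ⟨x, h⟩).2
      · intro h
        rcases lt_trichotomy x c with hx | hx | hx
        · exact hx
        · subst hx
          rw [hπ₀app, hFc] at h
          exact absurd h hiS
        · rw [hπ₀app, hFgt x hx] at h
          exact absurd (g ⟨x, hx⟩).2 (hST _ h)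
    have hpred : predecessors π₀ i = S := by
      ext j
      have hiff : (j ∈ predecessors π₀ i) ↔ π₀.symm j < c := by
        simp [predecessors, hsymm]
      rw [hiff, hq (π₀.symm j), Equiv.apply_symm_apply]
    refine ⟨⟨π₀, hpred⟩, ?_⟩
    have c1 : Equiv.subtypeEquiv π₀ (hmem₁ π₀ hpred) = f := by
      apply Equiv.ext
      rintro ⟨x, hx⟩
      apply Subtype.ext
      simpa [Equiv.subtypeEquiv, hπ₀app] using hFlt x hx
    have c2 : Equiv.subtypeEquiv π₀ (hmem₂ π₀ hpred) = g := by
      apply Equiv.ext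
      rintro ⟨x, hx⟩
      apply Subtype.ext
      simpa [Equiv.subtypeEquiv, hπ₀app] using hFgt x hx
    exact Prod.ext c1 c2
  -- conclude by counting
  have key := Fintype.card_congr (Equiv.ofBijective Φ ⟨hΦinj, hΦsurj⟩)
  have hlt : Fintype.card {x : α // x < c} = S.card := by
    rw [Fintype.card_subtype]
    exact hrank_c
  have hSc : Fintype.card {x : α // x ∈ S} = S.card := Fintype.card_coe S
  have hTc : Fintype.card {x : α // x ∈ T} = Fintype.card α - 1 - S.card := by
    rw [Fintype.card_coe]; exact hTcard
  have hgt : Fintype.card {x : α // c < x} = Fintype.card α - 1 - S.card := by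
    rw [Fintype.card_subtype]
    have hfe : Finset.univ.filter (fun x => c < x)
        = Finset.univ \ insert c (Finset.univ.filter (· < c)) := by
      ext x
      simp only [Finset.mem_filter, Finset.mem_univ, true_and, Finset.mem_sdiff,
        Finset.mem_insert, not_or]
      constructor
      · intro hx
        exact ⟨fun hh => absurd hx (by rw [hh]; exact lt_irrefl c), not_lt_of_gt hx⟩
      · rintro ⟨hne, hnlt⟩
        exact lt_of_le_of_ne (not_lt.1 hnlt) (Ne.symm hne)
    rw [hfe, Finset.card_sdiff_of_subset (Finset.subset_univ _), hcard_univ,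
      Finset.card_insert_of_notMem (by simp), hrank_c]
    omega
  rw [Fintype.card_subtype, Fintype.card_prod] at key
  rw [key, Fintype.card_equiv (Fintype.equivOfCardEq (hlt.trans hSc.symm)),
    Fintype.card_equiv (Fintype.equivOfCardEq (hgt.trans hTc.symm)), hlt, hgt]
end count

section L1
variable {α : Type*} [Fintype α] [LinearOrder α]

lemma pred_subset_erase [DecidableEq α] (π : Equiv.Perm α) (i : α) :
    predecessors π i ⊆ Finset.univ.erase i := by
  intro x hx
  simp only [predecessors, Finset.mem_filter] at hx
  exact Finset.mem_erase.2 ⟨fun hh => absurd (hh ▸ hx.2) (lt_irrefl _), Finset.mem_univ x⟩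

lemma perm_sum_eq [DecidableEq α] (i : α) (f : Finset α → ℝ) :
    ∑ π : Equiv.Perm α, f (predecessors π i)
      = ∑ S ∈ (Finset.univ.erase i).powerset,
          ((S.card ! * (Fintype.card α - 1 - S.card)! : ℕ) : ℝ) * f S := by
  classical
  have h := Finset.sum_fiberwise_of_maps_to (s := (Finset.univ : Finset (Equiv.Perm α)))
    (t := (Finset.univ.erase i).powerset) (g := fun π => predecessors π i)
    (fun π _ => Finset.mem_powerset.2 (pred_subset_erase π i))
    (fun π => f (predecessors π i))
  rw [← h]
  refine Finset.sum_congr rfl ?_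
  intro S hS
  have hcongr : ∀ π ∈ Finset.univ.filter (fun π : Equiv.Perm α => predecessors π i = S),
      f (predecessors π i) = f S := by
    intro π hπ; rw [(Finset.mem_filter.1 hπ).2]
  rw [Finset.sum_congr rfl hcongr, Finset.sum_const,
    card_perm_pred i S (Finset.mem_powerset.1 hS)]
  simp [nsmul_eq_mul]
end L1

lemma fiber_weight {α : Type*} [Fintype α] [LinearOrder α] [DecidableEq α] (A : Finset α) (i : α) (hi : i ∈ A)
    (T : Finset α) (hT : T ⊆ A.erase i) :
    A.card ! * ∑ S ∈ (Finset.univ.erase i).powerset.filter (fun S => S ∩ A.erase i = T),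
        S.card ! * (Fintype.card α - 1 - S.card)!
      = (Fintype.card α)! * (T.card ! * (A.card - 1 - T.card)!) := by
  classical
  set n := Fintype.card α with hn
  set B := (Finset.univ : Finset α) \ A with hB
  have hTA : T ⊆ A := hT.trans (Finset.erase_subset _ _)
  have hA1 : 1 ≤ A.card := Finset.card_pos.2 ⟨i, hi⟩
  have hAn : A.card ≤ n := by
    rw [hn, ← Finset.card_univ]; exact Finset.card_le_card (Finset.subset_univ A)
  have hBcard : B.card = n - A.card := by
    rw [hB, Finset.card_sdiff_of_subset (Finset.subset_univ A), Finset.card_univ, hn]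
  have htle : T.card ≤ A.card - 1 := by
    have := Finset.card_le_card hT
    rwa [Finset.card_erase_of_mem hi] at this
  have step1 : ∑ S ∈ (Finset.univ.erase i).powerset.filter (fun S => S ∩ A.erase i = T),
        S.card ! * (n - 1 - S.card)!
      = ∑ K ∈ B.powerset, (T.card + K.card)! * (n - 1 - (T.card + K.card))! := by
    refine Finset.sum_nbij' (fun S => S \ A) (fun K => T ∪ K) ?_ ?_ ?_ ?_ ?_
    · intro S hS
      refine Finset.mem_powerset.2 ?_
      intro x hx
      have := Finset.mem_sdiff.1 hx
      exact Finset.mem_sdiff.2 ⟨Finset.mem_univ x, this.2⟩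
    · intro K hK
      have hKB : K ⊆ B := Finset.mem_powerset.1 hK
      refine Finset.mem_filter.2 ⟨Finset.mem_powerset.2 ?_, ?_⟩
      · intro x hx
        rcases Finset.mem_union.1 hx with hx | hx
        · exact (Finset.erase_subset_erase i (Finset.subset_univ A)) (hT hx)
        · have := Finset.mem_sdiff.1 (hKB hx)
          exact Finset.mem_erase.2 ⟨fun hh => this.2 (hh ▸ hi), Finset.mem_univ x⟩
      · ext x
        simp only [Finset.mem_inter, Finset.mem_union]
        constructor
        · rintro ⟨hx | hx, hx2⟩
          · exact hx
          · exact absurd ((Finset.erase_subset _ _) hx2) (Finset.mem_sdiff.1 (hKB hx)).2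
        · intro hx
          exact ⟨Or.inl hx, hT hx⟩
    · intro S hS
      obtain ⟨hS1, hS2⟩ := Finset.mem_filter.1 hS
      have hS1' := Finset.mem_powerset.1 hS1
      ext x
      simp only [Finset.mem_union, Finset.mem_sdiff]
      constructor
      · rintro (hx | ⟨hx, _⟩)
        · exact (Finset.mem_inter.1 (hS2 ▸ hx)).1
        · exact hx
      · intro hx
        by_cases hxA : x ∈ A
        · left
          rw [← hS2]
          refine Finset.mem_inter.2 ⟨hx, Finset.mem_erase.2 ⟨?_, hxA⟩⟩
          exact (Finset.mem_erase.1 (hS1' hx)).1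
        · exact Or.inr ⟨hx, hxA⟩
    · intro K hK
      have hKB : K ⊆ B := Finset.mem_powerset.1 hK
      ext x
      simp only [Finset.mem_sdiff, Finset.mem_union]
      constructor
      · rintro ⟨hx | hx, hxA⟩
        · exact absurd (hTA hx) hxA
        · exact hx
      · intro hx
        exact ⟨Or.inr hx, (Finset.mem_sdiff.1 (hKB hx)).2⟩
    · intro S hS
      obtain ⟨hS1, hS2⟩ := Finset.mem_filter.1 hS
      have hS1' := Finset.mem_powerset.1 hS1
      have hunion : T ∪ (S \ A) = S := by
        ext x
        simp only [Finset.mem_union, Finset.mem_sdiff]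
        constructor
        · rintro (hx | ⟨hx, _⟩)
          · exact (Finset.mem_inter.1 (hS2 ▸ hx)).1
          · exact hx
        · intro hx
          by_cases hxA : x ∈ A
          · left
            rw [← hS2]
            refine Finset.mem_inter.2 ⟨hx, Finset.mem_erase.2 ⟨?_, hxA⟩⟩
            exact (Finset.mem_erase.1 (hS1' hx)).1
          · exact Or.inr ⟨hx, hxA⟩
      have hdisj : Disjoint T (S \ A) := by
        rw [Finset.disjoint_left]
        intro x hx hx2
        exact (Finset.mem_sdiff.1 hx2).2 (hTA hx)
      have hcardS : S.card = T.card + (S \ A).card := by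
        conv_lhs => rw [← hunion]
        exact Finset.card_union_of_disjoint hdisj
      rw [hcardS]
  have step2 : ∑ K ∈ B.powerset, (T.card + K.card)! * (n - 1 - (T.card + K.card))!
      = ∑ k ∈ range (B.card + 1),
          B.card.choose k * ((T.card + k)! * ((n-1) - (T.card + k))!) := by
    rw [Finset.sum_powerset]
    refine Finset.sum_congr rfl ?_
    intro j hj
    have : ∀ K ∈ Finset.powersetCard j B,
        (T.card + K.card)! * (n - 1 - (T.card + K.card))!
          = (T.card + j)! * ((n-1) - (T.card + j))! := by
      intro K hK
      rw [(Finset.mem_powersetCard.1 hK).2]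
    rw [Finset.sum_congr rfl this, Finset.sum_const, Finset.card_powersetCard,
      smul_eq_mul]
  rw [step1, step2]
  have hid := natid (A.card - 1) B.card T.card htle
  have e1 : A.card - 1 + 1 = A.card := by omega
  have e2 : A.card - 1 + B.card = n - 1 := by omega
  have e3 : A.card - 1 + B.card + 1 = n := by omega
  rw [e1, e3, e2] at hid
  exact hid

set_option maxHeartbeats 2000000 in
/-- For a convex TU game `v` on `Fin n`, any player `i` and any coalition `A` containing
`i`, the Shapley value of `i` in the sub-game `v_A` is at most the Shapley value of `i`
in `v`: the Shapley value encourages the grand coalition in convex games. -/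
theorem shapley_encourages_grand_coalition {n : ℕ}
    (v : Finset (Fin n) → ℝ) (h0 : v ∅ = 0)
    (hconv : ∀ A B : Finset (Fin n), v A + v B ≤ v (A ∪ B) + v (A ∩ B))
    (A : Finset (Fin n)) (i : Fin n) (hi : i ∈ A) :
    shapley (fun S : Finset {x : Fin n // x ∈ A} =>
        v (S.map (Function.Embedding.subtype _))) ⟨i, hi⟩
      ≤ shapley v i := by
  classical
  have hcardA : Fintype.card {x : Fin n // x ∈ A} = A.card := Fintype.card_coe A
  have hA1 : 1 ≤ A.card := Finset.card_pos.2 ⟨i, hi⟩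
  have hAN : A.card ≤ Fintype.card (Fin n) := Finset.card_le_univ A
  -- the subgame-side sum, rewritten over subsets of `A.erase i`
  have key1 : ∑ σ : Equiv.Perm {x : Fin n // x ∈ A},
        (v ((insert (⟨i, hi⟩ : {x : Fin n // x ∈ A}) (predecessors σ (⟨i, hi⟩ : {x : Fin n // x ∈ A}))).map (Function.Embedding.subtype fun x => x ∈ A)) - v ((predecessors σ (⟨i, hi⟩ : {x : Fin n // x ∈ A})).map (Function.Embedding.subtype fun x => x ∈ A)))
      = ∑ T ∈ (A.erase i).powerset,
          ((T.card ! * (A.card - 1 - T.card)! : ℕ) : ℝ) * (v (insert i T) - v T) := by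
    have h1 : ∑ σ : Equiv.Perm {x : Fin n // x ∈ A},
          (v ((insert (⟨i, hi⟩ : {x : Fin n // x ∈ A}) (predecessors σ (⟨i, hi⟩ : {x : Fin n // x ∈ A}))).map (Function.Embedding.subtype fun x => x ∈ A)) - v ((predecessors σ (⟨i, hi⟩ : {x : Fin n // x ∈ A})).map (Function.Embedding.subtype fun x => x ∈ A)))
        = ∑ S ∈ (Finset.univ.erase (⟨i, hi⟩ : {x : Fin n // x ∈ A})).powerset,
            ((S.card ! * (Fintype.card {x : Fin n // x ∈ A} - 1 - S.card)! : ℕ) : ℝ)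
              * (v ((insert (⟨i, hi⟩ : {x : Fin n // x ∈ A}) S).map (Function.Embedding.subtype fun x => x ∈ A)) - v (S.map (Function.Embedding.subtype fun x => x ∈ A))) :=
      perm_sum_eq (⟨i, hi⟩ : {x : Fin n // x ∈ A}) (fun S => v ((insert (⟨i, hi⟩ : {x : Fin n // x ∈ A}) S).map (Function.Embedding.subtype fun x => x ∈ A)) - v (S.map (Function.Embedding.subtype fun x => x ∈ A)))
    rw [h1]
    refine Finset.sum_nbij' (fun S => S.map (Function.Embedding.subtype fun x => x ∈ A)) (fun T => T.subtype (· ∈ A)) ?_ ?_ ?_ ?_ ?_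
    · intro S hS
      have hS' := Finset.mem_powerset.1 hS
      refine Finset.mem_powerset.2 ?_
      intro x hx
      obtain ⟨y, hy, rfl⟩ := Finset.mem_map.1 hx
      have hyne : y ≠ (⟨i, hi⟩ : {x : Fin n // x ∈ A}) := (Finset.mem_erase.1 (hS' hy)).1
      refine Finset.mem_erase.2 ⟨?_, y.2⟩
      intro hh
      exact hyne (Subtype.ext hh)
    · intro T hT
      have hT' := Finset.mem_powerset.1 hT
      refine Finset.mem_powerset.2 ?_
      intro y hy
      have hyT : (y : Fin n) ∈ T := Finset.mem_subtype.1 hy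
      refine Finset.mem_erase.2 ⟨?_, Finset.mem_univ y⟩
      intro hh
      have : (y : Fin n) = i := by rw [hh]
      exact (Finset.mem_erase.1 (hT' hyT)).1 this
    · intro S _
      ext y
      simp only [Finset.mem_subtype, Finset.mem_map, Function.Embedding.coe_subtype]
      constructor
      · rintro ⟨z, hz, hzy⟩
        rwa [Subtype.ext hzy] at hz
      · intro hy
        exact ⟨y, hy, rfl⟩
    · intro T hT
      have hT' := Finset.mem_powerset.1 hT
      exact Finset.subtype_map_of_mem
        (fun x hx => (Finset.mem_erase.1 (hT' hx)).2)
    · intro S _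
      have hc : (S.map (Function.Embedding.subtype fun x => x ∈ A)).card = S.card := Finset.card_map (Function.Embedding.subtype fun x => x ∈ A)
      have hins : (insert (⟨i, hi⟩ : {x : Fin n // x ∈ A}) S).map (Function.Embedding.subtype fun x => x ∈ A) = insert i (S.map (Function.Embedding.subtype fun x => x ∈ A)) := by
        rw [Finset.map_insert]
        rfl
      rw [hc, hins, hcardA]
  -- the full-game sum over subsets of `univ.erase i`
  have key2 : ∑ π : Equiv.Perm (Fin n),
        (v (insert i (predecessors π i)) - v (predecessors π i))
      = ∑ S ∈ (Finset.univ.erase i).powerset,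
          ((S.card ! * (Fintype.card (Fin n) - 1 - S.card)! : ℕ) : ℝ) * (v (insert i S) - v S) :=
    perm_sum_eq i (fun S => v (insert i S) - v S)
  -- group the full-game sum by fibers over subsets of `A.erase i`
  have key3 : ∑ T ∈ (A.erase i).powerset,
        ∑ S ∈ (Finset.univ.erase i).powerset.filter (fun S => S ∩ A.erase i = T),
          ((S.card ! * (Fintype.card (Fin n) - 1 - S.card)! : ℕ) : ℝ) * (v (insert i S) - v S)
      = ∑ S ∈ (Finset.univ.erase i).powerset,
          ((S.card ! * (Fintype.card (Fin n) - 1 - S.card)! : ℕ) : ℝ) * (v (insert i S) - v S) :=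
    Finset.sum_fiberwise_of_maps_to
      (fun S _ => Finset.mem_powerset.2 Finset.inter_subset_right) _
  -- monotonicity of marginal contributions (convexity)
  have hmono : ∀ T ∈ (A.erase i).powerset,
      ∀ S ∈ (Finset.univ.erase i).powerset.filter (fun S => S ∩ A.erase i = T),
        v (insert i T) - v T ≤ v (insert i S) - v S := by
    intro T _ S hS
    obtain ⟨hS1, hS2⟩ := Finset.mem_filter.1 hS
    have hTS : T ⊆ S := by rw [← hS2]; exact Finset.inter_subset_left
    have hiS : i ∉ S := fun h => (Finset.mem_erase.1 (Finset.mem_powerset.1 hS1 h)).1 rfl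
    have hu : insert i T ∪ S = insert i S := by
      ext x
      simp only [Finset.mem_union, Finset.mem_insert]
      constructor
      · rintro ((rfl | hx) | hx)
        · exact Or.inl rfl
        · exact Or.inr (hTS hx)
        · exact Or.inr hx
      · rintro (rfl | hx)
        · exact Or.inl (Or.inl rfl)
        · exact Or.inr hx
    have hint : insert i T ∩ S = T := by
      ext x
      simp only [Finset.mem_inter, Finset.mem_insert]
      constructor
      · rintro ⟨rfl | hx, hx2⟩
        · exact absurd hx2 hiS
        · exact hx
      · intro hx
        exact ⟨Or.inr hx, hTS hx⟩
    have hcv := hconv (insert i T) S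
    rw [hu, hint] at hcv
    linarith
  -- the key inequality between the two weighted sums
  have main : ((Fintype.card (Fin n))! : ℝ) * ∑ T ∈ (A.erase i).powerset,
        ((T.card ! * (A.card - 1 - T.card)! : ℕ) : ℝ) * (v (insert i T) - v T)
      ≤ (A.card ! : ℝ) * ∑ S ∈ (Finset.univ.erase i).powerset,
          ((S.card ! * (Fintype.card (Fin n) - 1 - S.card)! : ℕ) : ℝ) * (v (insert i S) - v S) := by
    rw [← key3, Finset.mul_sum, Finset.mul_sum]
    refine Finset.sum_le_sum ?_
    intro T hT
    have hfw := fiber_weight A i hi T (Finset.mem_powerset.1 hT)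
    have hfwr : ((Fintype.card (Fin n))! : ℝ) * ((T.card ! * (A.card - 1 - T.card)! : ℕ) : ℝ)
        = (A.card ! : ℝ) * ∑ S ∈ (Finset.univ.erase i).powerset.filter
            (fun S => S ∩ A.erase i = T), ((S.card ! * (Fintype.card (Fin n) - 1 - S.card)! : ℕ) : ℝ) := by
      have := congrArg (fun x : ℕ => (x : ℝ)) hfw
      push_cast at this ⊢
      linarith
    calc ((Fintype.card (Fin n))! : ℝ) * (((T.card ! * (A.card - 1 - T.card)! : ℕ) : ℝ) * (v (insert i T) - v T))
        = (((Fintype.card (Fin n))! : ℝ) * ((T.card ! * (A.card - 1 - T.card)! : ℕ) : ℝ)) * (v (insert i T) - v T) := by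
          ring
      _ = ((A.card ! : ℝ) * ∑ S ∈ (Finset.univ.erase i).powerset.filter
            (fun S => S ∩ A.erase i = T), ((S.card ! * (Fintype.card (Fin n) - 1 - S.card)! : ℕ) : ℝ))
            * (v (insert i T) - v T) := by rw [hfwr]
      _ = (A.card ! : ℝ) * ∑ S ∈ (Finset.univ.erase i).powerset.filter
            (fun S => S ∩ A.erase i = T),
            ((S.card ! * (Fintype.card (Fin n) - 1 - S.card)! : ℕ) : ℝ) * (v (insert i T) - v T) := by
          rw [Finset.mul_sum, Finset.mul_sum, Finset.sum_mul]
          exact Finset.sum_congr rfl fun _ _ => by ring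
      _ ≤ (A.card ! : ℝ) * ∑ S ∈ (Finset.univ.erase i).powerset.filter
            (fun S => S ∩ A.erase i = T),
            ((S.card ! * (Fintype.card (Fin n) - 1 - S.card)! : ℕ) : ℝ) * (v (insert i S) - v S) := by
          refine mul_le_mul_of_nonneg_left ?_ (by positivity)
          refine Finset.sum_le_sum ?_
          intro S hS
          exact mul_le_mul_of_nonneg_left (hmono T hT S hS) (by positivity)
  -- conclude
  have hde1 : (fun a b => LinearOrder.toDecidableEq a b : DecidableEq (Fin n))
      = (inferInstance : DecidableEq (Fin n)) := by
    funext a b; exact Subsingleton.elim _ _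
  have hde2 : (fun a b => LinearOrder.toDecidableEq a b : DecidableEq {x : Fin n // x ∈ A})
      = (inferInstance : DecidableEq {x : Fin n // x ∈ A}) := by
    funext a b; exact Subsingleton.elim _ _
  simp only [shapley, hde1, hde2]
  erw [key1, key2]
  rw [hcardA]
  have hNpos : (0 : ℝ) < ((Fintype.card (Fin n))! : ℝ) := by positivity
  have hApos : (0 : ℝ) < ((A.card)! : ℝ) := by positivity
  rw [inv_mul_eq_div, inv_mul_eq_div, div_le_div_iff₀ hApos hNpos]
  nlinarith [main]
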